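/- For a value function v on a finite set F of M features (M ≥ 1), the Shapley values satisfy the efficiency (additivity) property: the sum over all features j ∈ F of φ_j(v) equals v(F) − v(∅). Equivalently, the baseline v(∅) plus the sum of all Shapley values exactly reconstructs the value of the grand coalition, v(F). -/

import Mathlib

open Finset

/-- The Shapley value of feature `j` for a value function `v` on the finite
feature set `F` (with `M = Fintype.card F` features):
`φ_j(v) = Σ_{S ⊆ F \ {j}} (|S|! (M − |S| − 1)! / M!) (v(S ∪ {j}) − v(S))`. -/
noncomputable def shapley {F : Type*} [Fintype F] [DecidableEq F]
    (v : Finset F → ℝ) (j : F) : ℝ :=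
  ∑ S ∈ (Finset.univ.erase j).powerset,
    ((Nat.factorial S.card * Nat.factorial (Fintype.card F - S.card - 1) : ℝ) /
        (Nat.factorial (Fintype.card F) : ℝ)) * (v (insert j S) - v S)

/-- Efficiency (additivity) of Shapley values: the sum of all Shapley values
equals `v(F) − v(∅)`, i.e. the baseline `v(∅)` plus the sum of all Shapley
values reconstructs the value of the grand coalition `v(F)`. -/
theorem shapley_efficiency {F : Type*} [Fintype F] [DecidableEq F]
    (hM : 1 ≤ Fintype.card F) (v : Finset F → ℝ) :
    ∑ j : F, shapley v j = v Finset.univ - v ∅ := by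
  classical
  set M := Fintype.card F with hMdef
  set c : Finset F → ℝ := fun S =>
    ((Nat.factorial S.card * Nat.factorial (M - S.card - 1) : ℝ) /
        (Nat.factorial M : ℝ)) with hc
  set w : ℕ → ℝ := fun k =>
    ((Nat.factorial k * Nat.factorial (M - k) : ℝ) / (Nat.factorial M : ℝ)) with hw
  have hsplit : ∑ j : F, shapley v j =
      (∑ j : F, ∑ S ∈ (Finset.univ.erase j).powerset, c S * v (insert j S))
      - (∑ j : F, ∑ S ∈ (Finset.univ.erase j).powerset, c S * v S) := by
    rw [← Finset.sum_sub_distrib]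
    refine Finset.sum_congr rfl fun j _ => ?_
    rw [← Finset.sum_sub_distrib]
    exact Finset.sum_congr rfl fun S _ => by simp [shapley, hc, mul_sub, ← hMdef]
  -- positive part
  have hP : (∑ j : F, ∑ S ∈ (Finset.univ.erase j).powerset, c S * v (insert j S))
      = ∑ T ∈ (Finset.univ : Finset F).powerset.erase ∅, w T.card * v T := by
    rw [Finset.sum_sigma' (Finset.univ : Finset F)
      (fun j => (Finset.univ.erase j).powerset) (fun j S => c S * v (insert j S))]
    have step : (∑ p ∈ (Finset.univ : Finset F).sigma
          (fun j => (Finset.univ.erase j).powerset), c p.2 * v (insert p.1 p.2))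
        = ∑ q ∈ ((Finset.univ : Finset F).powerset.erase ∅).sigma (fun T => T),
          ((Nat.factorial (q.1.card - 1) * Nat.factorial (M - q.1.card) : ℝ) /
            (Nat.factorial M : ℝ)) * v q.1 := by
      refine Finset.sum_bij' (fun p _ => (⟨insert p.1 p.2, p.1⟩ : Σ _ : Finset F, F))
        (fun q _ => (⟨q.2, q.1.erase q.2⟩ : Σ _ : F, Finset F)) ?_ ?_ ?_ ?_ ?_
      · rintro ⟨j, S⟩ hp
        simp only [Finset.mem_sigma, Finset.mem_powerset, Finset.mem_univ, true_and] at hp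
        exact Finset.mem_sigma.mpr ⟨Finset.mem_erase.mpr
          ⟨Finset.insert_ne_empty _ _, Finset.mem_powerset.mpr (Finset.subset_univ _)⟩,
          Finset.mem_insert_self _ _⟩
      · rintro ⟨T, j⟩ hq
        simp only [Finset.mem_sigma] at hq
        refine Finset.mem_sigma.mpr ⟨Finset.mem_univ _, Finset.mem_powerset.mpr ?_⟩
        exact fun x hx => Finset.mem_erase.mpr ⟨(Finset.mem_erase.mp hx).1, Finset.mem_univ _⟩
      · rintro ⟨j, S⟩ hp
        simp only [Finset.mem_sigma, Finset.mem_powerset, Finset.mem_univ, true_and] at hp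
        have hjS : j ∉ S := fun h => (Finset.mem_erase.mp (hp h)).1 rfl
        simp [Finset.erase_insert hjS]
      · rintro ⟨T, j⟩ hq
        simp only [Finset.mem_sigma] at hq
        simp [Finset.insert_erase hq.2]
      · rintro ⟨j, S⟩ hp
        simp only [Finset.mem_sigma, Finset.mem_powerset, Finset.mem_univ, true_and] at hp
        have hjS : j ∉ S := fun h => (Finset.mem_erase.mp (hp h)).1 rfl
        have hcard : (insert j S).card = S.card + 1 := Finset.card_insert_of_notMem hjS
        simp only [hc, hcard]
        congr 3 <;> omega
    rw [step, Finset.sum_sigma]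
    refine Finset.sum_congr rfl fun T hT => ?_
    have hT' := Finset.mem_erase.mp hT
    have hpos : 0 < T.card := Finset.card_pos.mpr (Finset.nonempty_iff_ne_empty.mpr hT'.1)
    simp only [Finset.sum_const, nsmul_eq_mul]
    rw [hw]
    have hfac : (T.card : ℝ) * (Nat.factorial (T.card - 1) : ℝ)
        = (Nat.factorial T.card : ℝ) := by
      rw [← Nat.cast_mul, Nat.mul_factorial_pred hpos.ne']
    field_simp
    ring_nf
    rw [← hfac]
    ring
  -- negative part
  have hN : (∑ j : F, ∑ S ∈ (Finset.univ.erase j).powerset, c S * v S)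
      = ∑ T ∈ (Finset.univ : Finset F).powerset.erase Finset.univ, w T.card * v T := by
    rw [Finset.sum_comm' (s' := fun S => Finset.univ \ S)
      (t' := (Finset.univ : Finset F).powerset)]
    · have huniv : (∑ j ∈ Finset.univ \ (Finset.univ : Finset F),
          c Finset.univ * v Finset.univ) = 0 := by simp
      rw [← Finset.add_sum_erase _ _ (Finset.mem_powerset_self _), huniv, zero_add]
      refine Finset.sum_congr rfl fun T hT => ?_
      have hT' := Finset.mem_erase.mp hT
      have hss : T ⊂ Finset.univ :=
        lt_of_le_of_ne (Finset.mem_powerset.mp hT'.2) hT'.1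
      have hlt : T.card < M := Finset.card_lt_card hss
      rw [Finset.sum_const, nsmul_eq_mul, Finset.card_sdiff_of_subset (Finset.subset_univ _),
        Finset.card_univ, ← hMdef, hc, hw]
      have hfac : ((M - T.card : ℕ) : ℝ) * (Nat.factorial (M - T.card - 1) : ℝ)
          = (Nat.factorial (M - T.card) : ℝ) := by
        rw [← Nat.cast_mul]
        congr 1
        have : M - T.card - 1 = (M - T.card) - 1 := rfl
        rw [this, Nat.mul_factorial_pred (by omega)]
      field_simp
      rw [← hfac]
      ring
    · intro j S
      constructor
      · rintro ⟨-, hS⟩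
        rw [Finset.mem_powerset] at hS
        refine ⟨Finset.mem_sdiff.mpr ⟨Finset.mem_univ _, fun hj => ?_⟩,
          Finset.mem_powerset.mpr (Finset.subset_univ _)⟩
        exact (Finset.mem_erase.mp (hS hj)).1 rfl
      · rintro ⟨hj, -⟩
        refine ⟨Finset.mem_univ _, Finset.mem_powerset.mpr fun x hx =>
          Finset.mem_erase.mpr ⟨fun he => ?_, Finset.mem_univ _⟩⟩
        exact (Finset.mem_sdiff.mp hj).2 (he ▸ hx)
  have hMfac : (Nat.factorial M : ℝ) ≠ 0 := Nat.cast_ne_zero.mpr (Nat.factorial_ne_zero M)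
  have hw0 : w 0 = 1 := by simp [hw, hMfac]
  have hwM : w M = 1 := by simp [hw, hMfac]
  have hne : (Finset.univ : Finset F) ≠ ∅ := by
    intro h
    have := Finset.card_univ (α := F)
    rw [h] at this
    simp at this
    omega
  have hPfull := Finset.add_sum_erase ((Finset.univ : Finset F).powerset)
    (fun T => w T.card * v T) (Finset.mem_powerset.mpr (Finset.empty_subset Finset.univ))
  have hNfull := Finset.add_sum_erase ((Finset.univ : Finset F).powerset)
    (fun T => w T.card * v T) (Finset.mem_powerset_self (Finset.univ : Finset F))
  simp only [Finset.card_empty, Finset.card_univ, ← hMdef, hw0, hwM, one_mul] at hPfull hNfull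
  rw [hsplit, hP, hN]
  linarith
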